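/- Let 0 < H < 1/2 and T > 0. There exists a constant k_H (depending only on H and T) such that for every measurable function φ : [0,T] → ℝ with ‖φ‖_K² < ∞, the expression (K_H^*φ)(s) is absolutely convergent for almost every s ∈ (0,T) and ∫_0^T (K_H^*φ)(s)² ds ≤ k_H ‖φ‖_K². -/

import Mathlib

open MeasureTheory intervalIntegral Real

/-- The Beta function `β(x,y) = ∫_0^1 t^{x-1}(1-t)^{y-1} dt`. -/
noncomputable def betaFn (x y : ℝ) : ℝ := ∫ t in (0:ℝ)..1, t ^ (x - 1) * (1 - t) ^ (y - 1)

/-- The constant `c_H`. -/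
noncomputable def cH (H : ℝ) : ℝ :=
  (2 * H / ((1 - 2 * H) * betaFn (1 - 2 * H) (H + 1 / 2))) ^ ((1:ℝ) / 2)

/-- The kernel `K_H(t,s)` of fractional Brownian motion for `H < 1/2`. -/
noncomputable def KH (H t s : ℝ) : ℝ :=
  cH H * ((t / s) ^ (H - 1 / 2) * (t - s) ^ (H - 1 / 2) -
    (H - 1 / 2) * s ^ (1 / 2 - H) * ∫ u in s..t, u ^ (H - 3 / 2) * (u - s) ^ (H - 1 / 2))

/-- The partial derivative `∂K_H/∂t(t,s)`. -/
noncomputable def KHt (H t s : ℝ) : ℝ :=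
  cH H * (H - 1 / 2) * (t / s) ^ (H - 1 / 2) * (t - s) ^ (H - 3 / 2)

/-- The operator `K_H^*`:
`(K_H^*φ)(s) = K_H(T,s) φ(s) + ∫_s^T (φ(t)-φ(s)) ∂K_H/∂t(t,s) dt`. -/
noncomputable def KHstar (H T : ℝ) (φ : ℝ → ℝ) (s : ℝ) : ℝ :=
  KH H T s * φ s + ∫ t in Set.Ioo s T, (φ t - φ s) * KHt H t s

/-- The square `‖φ‖_K²` of the seminorm `‖·‖_K`, as a Lebesgue integral with values in `[0,∞]`:
`∫_0^T φ(s)²[(T-s)^{2H-1}+s^{2H-1}] ds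
  + ∫_0^T ( ∫_s^T |φ(t)-φ(s)| (t-s)^{H-3/2} dt )² ds`. -/
noncomputable def normKsq (H T : ℝ) (φ : ℝ → ℝ) : ENNReal :=
  (∫⁻ s in Set.Ioo 0 T, ENNReal.ofReal (φ s ^ 2 * ((T - s) ^ (2 * H - 1) + s ^ (2 * H - 1)))) +
  ∫⁻ s in Set.Ioo 0 T,
    (∫⁻ t in Set.Ioo s T, ENNReal.ofReal (|φ t - φ s| * (t - s) ^ (H - 3 / 2))) ^ 2

lemma rpow_sub_intervalIntegrable {r : ℝ} (hr : -1 < r) (s a b : ℝ) :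
    IntervalIntegrable (fun u => (u - s) ^ r) volume a b := by
  simpa using (intervalIntegrable_rpow' (a := a - s) (b := b - s) hr).comp_sub_right s

lemma integral_rpow_sub {r : ℝ} (hr : -1 < r) (s b : ℝ) :
    (∫ u in s..b, (u - s) ^ r) = (b - s) ^ (r + 1) / (r + 1) := by
  rw [intervalIntegral.integral_comp_sub_right (fun x => x ^ r) s, sub_self,
    integral_rpow (Or.inl hr), Real.zero_rpow (by linarith)]
  ring

lemma kint_meas {H s : ℝ} : Measurable (fun u : ℝ => u ^ (H - 3/2) * (u - s) ^ (H - 1/2)) := by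
  have h1 : Measurable fun u : ℝ => u ^ (H - 3/2) := by fun_prop
  have h2 : Measurable fun u : ℝ => (u - s) ^ (H - 1/2) := by fun_prop
  exact h1.mul h2

lemma kint_integrable {H : ℝ} (hH0 : 0 < H) (hH : H < 1/2) {s a b : ℝ} (hs : 0 < s)
    (hsa : s ≤ a) (hab : a ≤ b) :
    IntervalIntegrable (fun u => u ^ (H - 3/2) * (u - s) ^ (H - 1/2)) volume a b := by
  have hg : IntervalIntegrable (fun u => s ^ (H - 3/2) * (u - s) ^ (H - 1/2)) volume a b :=
    (rpow_sub_intervalIntegrable (by linarith) s a b).const_mul _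
  refine hg.mono_fun kint_meas.aestronglyMeasurable ?_
  rw [Set.uIoc_of_le hab]
  filter_upwards [ae_restrict_mem measurableSet_Ioc] with u hu
  have hsu : s < u := lt_of_le_of_lt hsa hu.1
  have h2 : (0:ℝ) ≤ (u - s) ^ (H - 1/2) := Real.rpow_nonneg (by linarith) _
  rw [Real.norm_eq_abs, Real.norm_eq_abs,
    abs_of_nonneg (mul_nonneg (Real.rpow_nonneg (by linarith) _) h2),
    abs_of_nonneg (mul_nonneg (Real.rpow_nonneg hs.le _) h2)]
  exact mul_le_mul_of_nonneg_right (Real.rpow_le_rpow_of_nonpos hs hsu.le (by linarith)) h2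

lemma near_bound {H : ℝ} (hH0 : 0 < H) (hH : H < 1/2) {s b : ℝ} (hs : 0 < s)
    (hsb : s ≤ b) (hbs : b - s ≤ s) :
    (∫ u in s..b, u ^ (H - 3/2) * (u - s) ^ (H - 1/2)) ≤ s ^ (2*H - 1) / (H + 1/2) := by
  have h1 : (∫ u in s..b, u ^ (H - 3/2) * (u - s) ^ (H - 1/2)) ≤
      ∫ u in s..b, s ^ (H - 3/2) * (u - s) ^ (H - 1/2) := by
    refine integral_mono_on hsb (kint_integrable hH0 hH hs le_rfl hsb)
      ((rpow_sub_intervalIntegrable (by linarith) s s b).const_mul _) ?_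
    intro u hu
    have h2 : (0:ℝ) ≤ (u - s) ^ (H - 1/2) := Real.rpow_nonneg (by linarith [hu.1]) _
    exact mul_le_mul_of_nonneg_right
      (Real.rpow_le_rpow_of_nonpos hs hu.1 (by linarith)) h2
  rw [intervalIntegral.integral_const_mul, integral_rpow_sub (by linarith)] at h1
  have h3 : (b - s) ^ (H - 1/2 + 1) ≤ s ^ (H - 1/2 + 1) :=
    Real.rpow_le_rpow (by linarith) hbs (by linarith)
  have hs' : (0:ℝ) ≤ s ^ (H - 3/2) := Real.rpow_nonneg hs.le _
  have h4 : s ^ (H - 3/2) * ((b-s) ^ (H - 1/2 + 1) / (H - 1/2 + 1)) ≤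
      s ^ (H - 3/2) * s ^ (H - 1/2 + 1) / (H - 1/2 + 1) := by
    rw [mul_div_assoc]
    gcongr
    linarith
  calc _ ≤ _ := h1
    _ ≤ s ^ (H - 3/2) * s ^ (H - 1/2 + 1) / (H - 1/2 + 1) := h4
    _ = s ^ (2*H - 1) / (H + 1/2) := by
        rw [← Real.rpow_add hs]
        ring_nf

lemma far_bound {H : ℝ} (hH0 : 0 < H) (hH : H < 1/2) {s b : ℝ} (hs : 0 < s)
    (hsb : 2*s ≤ b) :
    (∫ u in 2*s..b, u ^ (H - 3/2) * (u - s) ^ (H - 1/2)) ≤ 2 * (s ^ (2*H - 1) / (1 - 2*H)) := by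
  have h2s : (0:ℝ) < 2*s := by linarith
  have hnot : (0:ℝ) ∉ Set.uIcc (2*s) b := by
    rw [Set.uIcc_of_le hsb]; intro h; exact absurd h.1 (by linarith)
  have hgint : IntervalIntegrable (fun u => 2 ^ ((1:ℝ)/2 - H) * u ^ (2*H - 2)) volume (2*s) b :=
    (intervalIntegrable_rpow (Or.inr hnot)).const_mul _
  have h1 : (∫ u in 2*s..b, u ^ (H - 3/2) * (u - s) ^ (H - 1/2)) ≤
      ∫ u in 2*s..b, 2 ^ ((1:ℝ)/2 - H) * u ^ (2*H - 2) := by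
    refine integral_mono_on hsb (kint_integrable hH0 hH hs (by linarith) hsb) hgint ?_
    intro u hu
    have hu0 : (0:ℝ) < u := lt_of_lt_of_le h2s hu.1
    have hus : u / 2 ≤ u - s := by linarith [hu.1]
    have h2 : (u - s) ^ (H - 1/2) ≤ (u/2) ^ (H - 1/2) :=
      Real.rpow_le_rpow_of_nonpos (by linarith) hus (by linarith)
    have h3 : (u/2) ^ (H - 1/2) = 2 ^ ((1:ℝ)/2 - H) * u ^ (H - 1/2) := by
      rw [Real.div_rpow hu0.le (by norm_num), div_eq_mul_inv,
        ← Real.rpow_neg (by norm_num : (0:ℝ) ≤ 2), show -(H - 1/2) = (1:ℝ)/2 - H by ring]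
      ring
    calc u ^ (H - 3/2) * (u - s) ^ (H - 1/2)
        ≤ u ^ (H - 3/2) * (u/2) ^ (H - 1/2) :=
          mul_le_mul_of_nonneg_left h2 (Real.rpow_nonneg hu0.le _)
      _ = 2 ^ ((1:ℝ)/2 - H) * (u ^ (H - 3/2) * u ^ (H - 1/2)) := by rw [h3]; ring
      _ = 2 ^ ((1:ℝ)/2 - H) * u ^ (2*H - 2) := by
          rw [← Real.rpow_add hu0]; ring_nf
  rw [intervalIntegral.integral_const_mul,
    integral_rpow (Or.inr ⟨by intro h; norm_num at h; linarith, hnot⟩),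
    show 2*H - 2 + 1 = 2*H - 1 by ring] at h1
  have hb2s : b ^ (2*H-1) ≤ (2*s) ^ (2*H-1) :=
    Real.rpow_le_rpow_of_nonpos h2s hsb (by linarith)
  have e2 : (b ^ (2*H-1) - (2*s) ^ (2*H-1)) / (2*H-1) =
      ((2*s) ^ (2*H-1) - b ^ (2*H-1)) / (1 - 2*H) := by
    rw [div_eq_div_iff (by linarith) (by linarith)]; ring
  rw [e2] at h1
  have hX0 : (0:ℝ) ≤ ((2*s) ^ (2*H-1) - b ^ (2*H-1)) / (1 - 2*H) :=
    div_nonneg (by linarith) (by linarith)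
  have hb0 : (0:ℝ) ≤ b ^ (2*H - 1) := Real.rpow_nonneg (by linarith) _
  have h2s' : (2*s) ^ (2*H - 1) ≤ s ^ (2*H - 1) :=
    Real.rpow_le_rpow_of_nonpos hs (by linarith) (by linarith)
  have h4 : (2:ℝ) ^ ((1:ℝ)/2 - H) ≤ 2 := by
    calc (2:ℝ) ^ ((1:ℝ)/2 - H) ≤ 2 ^ (1:ℝ) :=
      Real.rpow_le_rpow_of_exponent_le one_le_two (by linarith)
    _ = 2 := Real.rpow_one 2
  have h5 : ((2*s) ^ (2*H-1) - b ^ (2*H-1)) / (1 - 2*H) ≤ s ^ (2*H-1) / (1 - 2*H) := by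
    gcongr
    · linarith
    · linarith
  calc _ ≤ _ := h1
    _ ≤ 2 * (s ^ (2*H - 1) / (1 - 2*H)) := mul_le_mul h4 h5 hX0 (by norm_num)

lemma R_le {H : ℝ} (hH0 : 0 < H) (hH : H < 1/2) {s T : ℝ} (hs : 0 < s) (hsT : s < T) :
    (∫ u in s..T, u ^ (H - 3/2) * (u - s) ^ (H - 1/2)) ≤
      (1/(H + 1/2) + 2/(1 - 2*H)) * s ^ (2*H - 1) := by
  have hsnn : (0:ℝ) ≤ s ^ (2*H-1) := Real.rpow_nonneg hs.le _
  rcases le_or_gt T (2*s) with hT2 | hT2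
  · have := near_bound hH0 hH hs hsT.le (by linarith)
    have h2 : (0:ℝ) ≤ 2 / (1 - 2*H) * s ^ (2*H-1) :=
      mul_nonneg (div_nonneg (by norm_num) (by linarith)) hsnn
    calc _ ≤ s ^ (2*H - 1) / (H + 1/2) := this
      _ = 1/(H + 1/2) * s ^ (2*H-1) := by ring
      _ ≤ _ := by rw [add_mul]; linarith
  · have hsplit : (∫ u in s..2*s, u ^ (H - 3/2) * (u - s) ^ (H - 1/2)) +
        (∫ u in 2*s..T, u ^ (H - 3/2) * (u - s) ^ (H - 1/2)) =
        ∫ u in s..T, u ^ (H - 3/2) * (u - s) ^ (H - 1/2) :=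
      integral_add_adjacent_intervals (kint_integrable hH0 hH hs le_rfl (by linarith))
        (kint_integrable hH0 hH hs (by linarith) hT2.le)
    rw [← hsplit]
    have h1 := near_bound hH0 hH hs (by linarith : s ≤ 2*s) (by linarith)
    have h2 := far_bound hH0 hH hs hT2.le
    calc _ ≤ s ^ (2*H - 1) / (H + 1/2) + 2 * (s ^ (2*H - 1) / (1 - 2*H)) := add_le_add h1 h2
      _ = (1/(H + 1/2) + 2/(1 - 2*H)) * s ^ (2*H - 1) := by ring

lemma KHt_abs_le {H : ℝ} (hH : H < 1/2) {s t : ℝ} (hs : 0 < s) (hst : s < t) :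
    |KHt H t s| ≤ (|cH H| * (1/2 - H)) * (t - s) ^ (H - 3/2) := by
  have hts : (0:ℝ) < t - s := by linarith
  have h1 : (0:ℝ) ≤ (t/s) ^ (H - 1/2) := Real.rpow_nonneg (div_nonneg (by linarith) hs.le) _
  have h2 : (0:ℝ) ≤ (t - s) ^ (H - 3/2) := Real.rpow_nonneg hts.le _
  have h3 : (t/s) ^ (H - 1/2) ≤ 1 :=
    Real.rpow_le_one_of_one_le_of_nonpos ((one_le_div hs).2 hst.le) (by linarith)
  rw [KHt, abs_mul, abs_mul, abs_mul, abs_of_nonneg h1, abs_of_nonneg h2,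
    abs_of_neg (by linarith : H - 1/2 < 0)]
  calc |cH H| * -(H - 1/2) * (t/s) ^ (H - 1/2) * (t - s) ^ (H - 3/2)
      ≤ |cH H| * -(H - 1/2) * 1 * (t - s) ^ (H - 3/2) := by
        have : (0:ℝ) ≤ |cH H| * -(H - 1/2) := mul_nonneg (abs_nonneg _) (by linarith)
        apply mul_le_mul_of_nonneg_right _ h2
        exact mul_le_mul_of_nonneg_left h3 this
    _ = (|cH H| * (1/2 - H)) * (t - s) ^ (H - 3/2) := by ring

lemma KH_abs_le {H : ℝ} (hH0 : 0 < H) (hH : H < 1/2) {s T : ℝ} (hs : 0 < s) (hsT : s < T) :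
    |KH H T s| ≤ (|cH H| * (1 + (1/2 - H) * (1/(H + 1/2) + 2/(1 - 2*H)))) *
      ((T - s) ^ (H - 1/2) + s ^ (H - 1/2)) := by
  have hTs : (0:ℝ) < T - s := by linarith
  set CR := 1/(H + 1/2) + 2/(1 - 2*H) with hCR
  have hCR0 : 0 ≤ CR := by
    apply add_nonneg <;> [skip; skip] <;>
      exact div_nonneg (by norm_num) (by linarith)
  set R := ∫ u in s..T, u ^ (H - 3/2) * (u - s) ^ (H - 1/2) with hR
  have hR0 : 0 ≤ R := by
    refine intervalIntegral.integral_nonneg hsT.le fun u hu => ?_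
    exact mul_nonneg (Real.rpow_nonneg (by linarith [hu.1]) _)
      (Real.rpow_nonneg (by linarith [hu.1]) _)
  have hRle : R ≤ CR * s ^ (2*H - 1) := R_le hH0 hH hs hsT
  have hx : (0:ℝ) ≤ (T - s) ^ (H - 1/2) := Real.rpow_nonneg hTs.le _
  have hy : (0:ℝ) ≤ s ^ (H - 1/2) := Real.rpow_nonneg hs.le _
  have hP : |(T/s) ^ (H - 1/2) * (T - s) ^ (H - 1/2)| ≤ (T - s) ^ (H - 1/2) := by
    have h1 : (0:ℝ) ≤ (T/s) ^ (H - 1/2) := Real.rpow_nonneg (div_nonneg (by linarith) hs.le) _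
    have h3 : (T/s) ^ (H - 1/2) ≤ 1 :=
      Real.rpow_le_one_of_one_le_of_nonpos ((one_le_div hs).2 hsT.le) (by linarith)
    rw [abs_of_nonneg (mul_nonneg h1 hx)]
    nlinarith
  have hQ : |(H - 1/2) * s ^ ((1:ℝ)/2 - H) * R| ≤ (1/2 - H) * CR * s ^ (H - 1/2) := by
    have hsp : (0:ℝ) ≤ s ^ ((1:ℝ)/2 - H) := Real.rpow_nonneg hs.le _
    rw [abs_mul, abs_mul, abs_of_nonneg hsp, abs_of_nonneg hR0,
      abs_of_neg (by linarith : H - 1/2 < 0)]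
    have key : s ^ ((1:ℝ)/2 - H) * (CR * s ^ (2*H - 1)) = CR * s ^ (H - 1/2) := by
      rw [mul_comm CR, ← mul_assoc, ← Real.rpow_add hs,
        show (1:ℝ)/2 - H + (2*H - 1) = H - 1/2 by ring]
      ring
    calc -(H - 1/2) * s ^ ((1:ℝ)/2 - H) * R
        ≤ -(H - 1/2) * (s ^ ((1:ℝ)/2 - H) * (CR * s ^ (2*H - 1))) := by
          rw [mul_assoc]
          apply mul_le_mul_of_nonneg_left _ (by linarith)
          exact mul_le_mul_of_nonneg_left hRle hsp
      _ = (1/2 - H) * CR * s ^ (H - 1/2) := by rw [key]; ring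
  rw [KH, abs_mul]
  have habs : |(T/s) ^ (H - 1/2) * (T - s) ^ (H - 1/2) -
      (H - 1/2) * s ^ ((1:ℝ)/2 - H) * R| ≤
      (1 + (1/2 - H) * CR) * ((T - s) ^ (H - 1/2) + s ^ (H - 1/2)) := by
    have := abs_sub ((T/s) ^ (H - 1/2) * (T - s) ^ (H - 1/2))
      ((H - 1/2) * s ^ ((1:ℝ)/2 - H) * R)
    have hco : (1/2 - H) * CR ≤ 1 + (1/2 - H) * CR := by linarith
    nlinarith [mul_nonneg (mul_nonneg (by linarith : (0:ℝ) ≤ 1/2 - H) hCR0) hx]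
  calc |cH H| * _ ≤ |cH H| * ((1 + (1/2 - H) * CR) * ((T - s) ^ (H - 1/2) + s ^ (H - 1/2))) :=
        mul_le_mul_of_nonneg_left habs (abs_nonneg _)
    _ = _ := by rw [hCR]; ring

set_option maxHeartbeats 1000000 in
/-- for `0 < H < 1/2` and `T > 0` there is a constant `k_H` such that for every
measurable `φ : [0,T] → ℝ` with `‖φ‖_K² < ∞`, the integral defining `(K_H^*φ)(s)` converges
absolutely for a.e. `s ∈ (0,T)` and `∫_0^T (K_H^*φ)(s)² ds ≤ k_H ‖φ‖_K²`. -/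
theorem KHstar_L2_bound (H T : ℝ) (hH0 : 0 < H) (hH : H < 1 / 2) (hT : 0 < T) :
    ∃ kH : ℝ, 0 < kH ∧ ∀ φ : ℝ → ℝ, Measurable φ → normKsq H T φ < ⊤ →
      (∀ᵐ s ∂(volume.restrict (Set.Ioo 0 T)),
        IntegrableOn (fun t => (φ t - φ s) * KHt H t s) (Set.Ioo s T)) ∧
      ∫⁻ s in Set.Ioo 0 T, ENNReal.ofReal ((KHstar H T φ s) ^ 2) ≤
        ENNReal.ofReal kH * normKsq H T φ := by
  obtain ⟨A, hA⟩ : ∃ A, |cH H| * (1/2 - H) = A := ⟨_, rfl⟩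
  obtain ⟨B, hB⟩ : ∃ B, |cH H| * (1 + (1/2 - H) * (1/(H + 1/2) + 2/(1 - 2*H))) = B := ⟨_, rfl⟩
  have hA0 : 0 ≤ A := hA ▸ mul_nonneg (abs_nonneg _) (by linarith)
  have hB0 : 0 ≤ B := by
    rw [← hB]
    apply mul_nonneg (abs_nonneg _)
    have : (0:ℝ) ≤ (1/2 - H) * (1/(H + 1/2) + 2/(1 - 2*H)) := by
      apply mul_nonneg (by linarith)
      apply add_nonneg <;> exact div_nonneg (by norm_num) (by linarith)
    linarith
  refine ⟨4*B^2 + 2*A^2 + 1, by positivity, fun φ hφ hφK => ?_⟩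
  set L : ℝ → ENNReal :=
    fun s => ∫⁻ t in Set.Ioo s T, ENNReal.ofReal (|φ t - φ s| * (t - s) ^ (H - 3/2)) with hL
  -- measurability of L
  have hLmeas : Measurable L := by
    have hm2 : Measurable fun p : ℝ × ℝ => (p.2 - p.1) ^ (H - 3/2) := by fun_prop
    have hmg : Measurable fun p : ℝ × ℝ =>
        ENNReal.ofReal (|φ p.2 - φ p.1| * (p.2 - p.1) ^ (H - 3/2)) :=
      ENNReal.measurable_ofReal.comp
        ((((hφ.comp measurable_snd).sub (hφ.comp measurable_fst)).abs).mul hm2)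
    have hset : MeasurableSet {p : ℝ × ℝ | p.1 < p.2 ∧ p.2 < T} :=
      (measurableSet_lt measurable_fst measurable_snd).inter
        (measurableSet_lt measurable_snd measurable_const)
    have hG : Measurable fun p : ℝ × ℝ =>
        if p.1 < p.2 ∧ p.2 < T then
          ENNReal.ofReal (|φ p.2 - φ p.1| * (p.2 - p.1) ^ (H - 3/2)) else 0 :=
      Measurable.ite hset hmg measurable_const
    have hLeq : L = fun s => ∫⁻ t,
        (fun p : ℝ × ℝ => if p.1 < p.2 ∧ p.2 < T then
          ENNReal.ofReal (|φ p.2 - φ p.1| * (p.2 - p.1) ^ (H - 3/2)) else 0) (s, t) := by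
      funext s
      show (∫⁻ t in Set.Ioo s T, ENNReal.ofReal (|φ t - φ s| * (t - s) ^ (H - 3/2))) = _
      rw [← lintegral_indicator measurableSet_Ioo]
      congr 1
      funext t
      simp only [Set.indicator, Set.mem_Ioo]
    rw [hLeq]
    exact hG.lintegral_prod_right'
  -- a.e. finiteness of L
  have hI2 : (∫⁻ s in Set.Ioo 0 T, (L s) ^ 2) < ⊤ := by
    refine lt_of_le_of_lt ?_ hφK
    rw [normKsq]
    exact le_add_self
  have hfin : ∀ᵐ s ∂(volume.restrict (Set.Ioo 0 T)), L s < ⊤ := by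
    have h2 := ae_lt_top (hLmeas.pow_const 2) hI2.ne
    filter_upwards [h2] with s hs
    rcases eq_top_or_lt_top (L s) with h | h
    · exfalso
      rw [h, ENNReal.top_pow (by norm_num)] at hs
      exact lt_irrefl _ hs
    · exact h
  -- the common pointwise estimate
  have key : ∀ s ∈ Set.Ioo 0 T,
      (∫⁻ t in Set.Ioo s T, ‖(φ t - φ s) * KHt H t s‖₊) ≤ ENNReal.ofReal A * L s := by
    intro s hs
    rw [hL, ← lintegral_const_mul' _ _ ENNReal.ofReal_ne_top]
    refine lintegral_mono_ae ((ae_restrict_iff' measurableSet_Ioo).2 (ae_of_all _ fun t ht => ?_))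
    rw [← enorm_eq_nnnorm, Real.enorm_eq_ofReal_abs, ← ENNReal.ofReal_mul hA0]
    apply ENNReal.ofReal_le_ofReal
    rw [abs_mul]
    calc |φ t - φ s| * |KHt H t s|
        ≤ |φ t - φ s| * (A * (t - s) ^ (H - 3/2)) :=
          mul_le_mul_of_nonneg_left (hA ▸ KHt_abs_le hH hs.1 ht.1) (abs_nonneg _)
      _ = A * (|φ t - φ s| * (t - s) ^ (H - 3/2)) := by ring
  -- measurability of the integrand in t
  have hKtm : ∀ s : ℝ, Measurable fun t => (φ t - φ s) * KHt H t s := by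
    intro s
    have m1 : Measurable fun t : ℝ => (t / s) ^ (H - 1/2) := by fun_prop
    have m2 : Measurable fun t : ℝ => (t - s) ^ (H - 3/2) := by fun_prop
    exact (hφ.sub_const (φ s)).mul (((m1.const_mul (cH H * (H - 1/2))).mul m2))
  -- integrability for good s
  have hInt : ∀ s ∈ Set.Ioo 0 T, L s < ⊤ →
      IntegrableOn (fun t => (φ t - φ s) * KHt H t s) (Set.Ioo s T) := by
    intro s hs hLs
    refine ⟨(hKtm s).aestronglyMeasurable, ?_⟩
    exact lt_of_le_of_lt (key s hs) (ENNReal.mul_lt_top ENNReal.ofReal_lt_top hLs)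
  constructor
  · filter_upwards [hfin, ae_restrict_mem measurableSet_Ioo] with s h1 h2
    exact hInt s h2 h1
  -- pointwise bound on KHstar
  have hbound : ∀ s ∈ Set.Ioo 0 T, L s < ⊤ →
      ENNReal.ofReal ((KHstar H T φ s) ^ 2) ≤
        ENNReal.ofReal (4*B^2) *
          ENNReal.ofReal (φ s ^ 2 * ((T - s) ^ (2*H - 1) + s ^ (2*H - 1))) +
        ENNReal.ofReal (2*A^2) * (L s) ^ 2 := by
    intro s hs hLs
    obtain ⟨hs0, hsT⟩ := hs
    have hTs : (0:ℝ) < T - s := by linarith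
    obtain ⟨a, ha⟩ : ∃ a, KH H T s * φ s = a := ⟨_, rfl⟩
    obtain ⟨b, hb⟩ : ∃ b, (∫ t in Set.Ioo s T, (φ t - φ s) * KHt H t s) = b := ⟨_, rfl⟩
    have hsplit : KHstar H T φ s = a + b := by rw [KHstar, ha, hb]
    have step1 : ENNReal.ofReal ((a + b) ^ 2) ≤
        ENNReal.ofReal (2*a^2) + ENNReal.ofReal (2*b^2) := by
      rw [← ENNReal.ofReal_add (by positivity) (by positivity)]
      exact ENNReal.ofReal_le_ofReal (by nlinarith [sq_nonneg (a - b)])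
    -- step 2 : first term
    obtain ⟨x, hx⟩ : ∃ x, (T - s) ^ (H - 1/2) = x := ⟨_, rfl⟩
    obtain ⟨y, hy⟩ : ∃ y, s ^ (H - 1/2) = y := ⟨_, rfl⟩
    have hx0 : 0 ≤ x := hx ▸ Real.rpow_nonneg hTs.le _
    have hy0 : 0 ≤ y := hy ▸ Real.rpow_nonneg hs0.le _
    have hx2 : x^2 = (T - s) ^ (2*H - 1) := by
      rw [← hx, sq, ← Real.rpow_add hTs, show H - 1/2 + (H - 1/2) = 2*H - 1 by ring]
    have hy2 : y^2 = s ^ (2*H - 1) := by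
      rw [← hy, sq, ← Real.rpow_add hs0, show H - 1/2 + (H - 1/2) = 2*H - 1 by ring]
    have hKH : |KH H T s| ≤ B * (x + y) := by
      rw [← hx, ← hy, ← hB]
      exact KH_abs_le hH0 hH hs0 hsT
    have hreal : 2*a^2 ≤ (4*B^2) * (φ s ^ 2 * ((T - s) ^ (2*H - 1) + s ^ (2*H - 1))) := by
      rw [← hx2, ← hy2, ← ha]
      have h1 : (KH H T s)^2 ≤ (B * (x + y))^2 := by
        rw [← sq_abs]
        exact pow_le_pow_left₀ (abs_nonneg _) hKH 2
      have h2 : (B * (x + y))^2 ≤ 2*B^2*(x^2 + y^2) := by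
        nlinarith [sq_nonneg (x - y), sq_nonneg B]
      have h3 : (KH H T s)^2 ≤ 2*B^2*(x^2 + y^2) := h1.trans h2
      nlinarith [mul_le_mul_of_nonneg_left h3 (sq_nonneg (φ s))]
    have step2 : ENNReal.ofReal (2*a^2) ≤
        ENNReal.ofReal (4*B^2) *
          ENNReal.ofReal (φ s ^ 2 * ((T - s) ^ (2*H - 1) + s ^ (2*H - 1))) := by
      rw [← ENNReal.ofReal_mul (by positivity)]
      exact ENNReal.ofReal_le_ofReal hreal
    -- step 3 : second term
    have hbabs : ENNReal.ofReal |b| ≤ ENNReal.ofReal A * L s := by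
      rw [← Real.enorm_eq_ofReal_abs, ← hb]
      exact le_trans (enorm_integral_le_lintegral_enorm _) (key s ⟨hs0, hsT⟩)
    have step3 : ENNReal.ofReal (2*b^2) ≤ ENNReal.ofReal (2*A^2) * (L s) ^ 2 := by
      have e1 : ENNReal.ofReal (2*b^2) = 2 * (ENNReal.ofReal |b|) ^ 2 := by
        rw [ENNReal.ofReal_mul (by norm_num : (0:ℝ) ≤ 2), ← sq_abs b,
          ENNReal.ofReal_pow (abs_nonneg b), ENNReal.ofReal_ofNat]
      have e2 : ENNReal.ofReal (2*A^2) = 2 * (ENNReal.ofReal A) ^ 2 := by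
        rw [ENNReal.ofReal_mul (by norm_num : (0:ℝ) ≤ 2),
          ENNReal.ofReal_pow hA0, ENNReal.ofReal_ofNat]
      rw [e1, e2, mul_assoc, ← mul_pow]
      gcongr
    rw [hsplit]
    calc ENNReal.ofReal ((a + b) ^ 2) ≤ ENNReal.ofReal (2*a^2) + ENNReal.ofReal (2*b^2) := step1
      _ ≤ _ := add_le_add step2 step3
  -- integrate
  have hF1meas : Measurable fun s =>
      ENNReal.ofReal (φ s ^ 2 * ((T - s) ^ (2*H - 1) + s ^ (2*H - 1))) := by
    have m1 : Measurable fun s : ℝ => (T - s) ^ (2*H - 1) := by fun_prop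
    have m2 : Measurable fun s : ℝ => s ^ (2*H - 1) := by fun_prop
    exact ENNReal.measurable_ofReal.comp ((hφ.pow_const 2).mul (m1.add m2))
  have hkH4 : ENNReal.ofReal (4*B^2) ≤ ENNReal.ofReal (4*B^2 + 2*A^2 + 1) :=
    ENNReal.ofReal_le_ofReal (by nlinarith)
  have hkH2 : ENNReal.ofReal (2*A^2) ≤ ENNReal.ofReal (4*B^2 + 2*A^2 + 1) :=
    ENNReal.ofReal_le_ofReal (by nlinarith)
  calc ∫⁻ s in Set.Ioo 0 T, ENNReal.ofReal ((KHstar H T φ s) ^ 2)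
      ≤ ∫⁻ s in Set.Ioo 0 T,
          (ENNReal.ofReal (4*B^2) *
            ENNReal.ofReal (φ s ^ 2 * ((T - s) ^ (2*H - 1) + s ^ (2*H - 1))) +
          ENNReal.ofReal (2*A^2) * (L s) ^ 2) := by
        refine lintegral_mono_ae ?_
        filter_upwards [hfin, ae_restrict_mem measurableSet_Ioo] with s h1 h2
        exact hbound s h2 h1
    _ = ENNReal.ofReal (4*B^2) *
          (∫⁻ s in Set.Ioo 0 T,
            ENNReal.ofReal (φ s ^ 2 * ((T - s) ^ (2*H - 1) + s ^ (2*H - 1)))) +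
        ENNReal.ofReal (2*A^2) * ∫⁻ s in Set.Ioo 0 T, (L s) ^ 2 := by
        rw [lintegral_add_left (hF1meas.const_mul _),
          lintegral_const_mul' _ _ ENNReal.ofReal_ne_top,
          lintegral_const_mul' _ _ ENNReal.ofReal_ne_top]
    _ ≤ ENNReal.ofReal (4*B^2 + 2*A^2 + 1) *
          (∫⁻ s in Set.Ioo 0 T,
            ENNReal.ofReal (φ s ^ 2 * ((T - s) ^ (2*H - 1) + s ^ (2*H - 1)))) +
        ENNReal.ofReal (4*B^2 + 2*A^2 + 1) * ∫⁻ s in Set.Ioo 0 T, (L s) ^ 2 :=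
        add_le_add (mul_le_mul' hkH4 le_rfl) (mul_le_mul' hkH2 le_rfl)
    _ = ENNReal.ofReal (4*B^2 + 2*A^2 + 1) * normKsq H T φ := by
        rw [normKsq, mul_add]
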